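/- For every λ ∈ ℂ with λ ≠ 1, every integer n ≥ 1, every a ∈ ℤ_{≥0}, and every integer p with 0 ≤ p ≤ n-1, the Stirling number of the first kind satisfies S₁(n, p+1) = (1/(1-λ))^{an} · Σ_{k=0}^{an} Σ_{l=p}^{n-1} Σ_{m=p}^{l} C(an, k) · C(n-1, l) · C(l, m) · C(m, p) · k^{n-1-l} · (-λ)^{an-k} · H_{l-m}^{(an)}(λ) · B_{m-p}^{(n)}. -/

import Mathlib

open PowerSeries
/-- The formal power series `e^{ct} = ∑_{m≥0} c^m t^m / m!` over `ℂ`. -/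
noncomputable def expPS (c : ℂ) : PowerSeries ℂ :=
  PowerSeries.mk fun m => c ^ m / (m.factorial : ℂ)

lemma expPS_coeff (c : ℂ) (m : ℕ) : coeff m (expPS c) = c ^ m / (m.factorial : ℂ) :=
  coeff_mk m _

lemma expPS_zero : expPS 0 = 1 := by
  ext m
  rcases m with _|m <;> simp [expPS_coeff, coeff_one]

lemma expPS_mul (c d : ℂ) : expPS c * expPS d = expPS (c + d) := by
  ext m
  rw [coeff_mul, expPS_coeff, Finset.Nat.sum_antidiagonal_eq_sum_range_succ
    (f := fun i j => coeff i (expPS c) * coeff j (expPS d)), add_pow]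
  rw [Finset.sum_div]
  refine Finset.sum_congr rfl fun i hi => ?_
  rw [Finset.mem_range, Nat.lt_succ_iff] at hi
  rw [expPS_coeff, expPS_coeff]
  rw [div_mul_div_comm, div_eq_div_iff]
  · push_cast [← Nat.choose_mul_factorial_mul_factorial hi]
    ring
  · exact mul_ne_zero (Nat.cast_ne_zero.mpr (Nat.factorial_ne_zero _)) (Nat.cast_ne_zero.mpr (Nat.factorial_ne_zero _))
  · exact Nat.cast_ne_zero.mpr (Nat.factorial_ne_zero _)

lemma expPS_pow (k : ℕ) : (expPS 1) ^ k = expPS (k : ℂ) := by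
  induction k with
  | zero => simp [expPS_zero]
  | succ k ih => rw [pow_succ, ih, expPS_mul]; push_cast; ring_nf

lemma expPS_deriv (x : ℂ) : d⁄dX ℂ (expPS x) = PowerSeries.C x * expPS x := by
  ext m
  rw [coeff_derivative, coeff_C_mul, expPS_coeff, expPS_coeff, Nat.factorial_succ]
  push_cast
  have h1 : ((m:ℂ)+1) ≠ 0 := by exact_mod_cast Nat.succ_ne_zero m
  have h2 : ((m.factorial:ℂ)) ≠ 0 := Nat.cast_ne_zero.mpr (Nat.factorial_ne_zero _)
  field_simp
  ring

lemma constCoeff_expPS (c : ℂ) : constantCoeff (expPS c) = 1 := by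
  have := expPS_coeff c 0
  rwa [coeff_zero_eq_constantCoeff, pow_zero, Nat.factorial_zero, Nat.cast_one, div_one] at this

section V
variable (v : PowerSeries ℂ) (hv : (expPS 1 - 1) * v = PowerSeries.X)

lemma E_sub_one_ne : (expPS 1 - 1 : PowerSeries ℂ) ≠ 0 := by
  intro h
  have := congrArg (coeff 1) h
  simp [expPS_coeff, coeff_one] at this

include hv in
lemma v_const : constantCoeff v = 1 := by
  have := congrArg (coeff 1) hv
  rw [coeff_mul] at this
  simp [Finset.Nat.antidiagonal_succ, expPS_coeff, coeff_one,
    coeff_zero_eq_constantCoeff] at this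
  simpa using this

include hv in
lemma hDv : expPS 1 * v + (expPS 1 - 1) * (d⁄dX ℂ v) = 1 := by
  have := congrArg (d⁄dX ℂ) hv
  rw [Derivation.leibniz, derivative_X, map_sub, expPS_deriv, Derivation.map_one_eq_zero,
    map_one, one_mul, sub_zero, smul_eq_mul, smul_eq_mul] at this
  linear_combination this

end V

section V2
variable (v : PowerSeries ℂ) (hv : (expPS 1 - 1) * v = PowerSeries.X)

include hv in
lemma key_step (n : ℕ) (x : ℂ) :
    ((n : ℂ) + 1) * coeff (n+1) (v ^ (n+2) * expPS x)
      = (x - ((n : ℂ) + 1)) * coeff n (v ^ (n+1) * expPS x) := by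
  set E := expPS 1 with hE
  have h1 : (E - 1) * v ^ (n+1) = PowerSeries.X * v ^ n := by
    rw [pow_succ', ← mul_assoc, hv]
  have h2 : (E - 1) * v ^ (n+2) = PowerSeries.X * v ^ (n+1) := by
    rw [pow_succ', ← mul_assoc, hv]
  have h3 : (E - 1) * d⁄dX ℂ v = 1 - E * v := by
    linear_combination (hDv v hv)
  have hD : d⁄dX ℂ (v^(n+1)) = PowerSeries.C ((n:ℂ)+1) * (v^n * d⁄dX ℂ v) := by
    rw [Derivation.leibniz_pow, Nat.add_sub_cancel, smul_eq_mul, nsmul_eq_mul,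
      ← map_natCast (PowerSeries.C (R := ℂ)) (n+1)]
    push_cast
    ring
  have hser0 : PowerSeries.X * d⁄dX ℂ (v^(n+1))
      = PowerSeries.C ((n:ℂ)+1) * (v^(n+1) - E * v^(n+2)) := by
    apply mul_left_cancel₀ (E_sub_one_ne)
    linear_combination ((E-1) * PowerSeries.X) * hD
      + (PowerSeries.C ((n:ℂ)+1) * PowerSeries.X * v^n) * h3
      - PowerSeries.C ((n:ℂ)+1) * h1
      + (PowerSeries.C ((n:ℂ)+1) * E) * h2
  have hser : PowerSeries.C ((n:ℂ)+1) * (v^(n+2) * expPS x)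
      = PowerSeries.C ((n:ℂ)+1) * (v^(n+1) * expPS x)
        - PowerSeries.C ((n:ℂ)+1) * (PowerSeries.X * (v^(n+1) * expPS x))
        - PowerSeries.X * (d⁄dX ℂ (v^(n+1)) * expPS x) := by
    linear_combination (expPS x) * hser0 - (PowerSeries.C ((n:ℂ)+1) * expPS x) * h2
  have hprod : coeff n (d⁄dX ℂ (v^(n+1)) * expPS x)
      = ((n:ℂ)+1) * coeff (n+1) (v^(n+1) * expPS x) - x * coeff n (v^(n+1) * expPS x) := by
    have hD2 : d⁄dX ℂ (v^(n+1) * expPS x) = d⁄dX ℂ (v^(n+1)) * expPS x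
        + PowerSeries.C x * (v^(n+1) * expPS x) := by
      rw [Derivation.leibniz, expPS_deriv, smul_eq_mul, smul_eq_mul]
      ring
    have h5 := congrArg (coeff n) hD2
    rw [coeff_derivative, map_add, coeff_C_mul] at h5
    linear_combination -h5
  have h6 := congrArg (coeff (n+1)) hser
  rw [map_sub, map_sub, coeff_C_mul, coeff_C_mul, coeff_C_mul, coeff_succ_X_mul,
    coeff_succ_X_mul] at h6
  linear_combination h6 - hprod

include hv in
lemma betaB (n : ℕ) (x : ℂ) :
    (n.factorial : ℂ) * coeff n (v ^ (n+1) * expPS x)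
      = ∏ i ∈ Finset.range n, (x - (i+1)) := by
  induction n with
  | zero =>
      simp only [Nat.factorial_zero, Nat.cast_one, one_mul, Finset.range_zero,
        Finset.prod_empty, coeff_zero_eq_constantCoeff, map_mul]
      rw [pow_one, v_const v hv, constCoeff_expPS, one_mul]
  | succ n ih =>
      rw [Finset.prod_range_succ, ← ih, Nat.factorial_succ]
      push_cast
      have := key_step v hv n x
      linear_combination (n.factorial : ℂ) * this

end V2
lemma factC (m l : ℕ) (h : m ≤ l) :
    ((l.choose m : ℂ)) = (l.factorial : ℂ) / ((m.factorial : ℂ) * ((l-m).factorial : ℂ)) := by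
  rw [eq_div_iff (by exact_mod_cast mul_ne_zero (Nat.factorial_ne_zero m) (Nat.factorial_ne_zero (l-m)))]
  rw [← mul_assoc]
  exact_mod_cast congrArg (Nat.cast (R := ℂ)) (Nat.choose_mul_factorial_mul_factorial h)

lemma coeff_EsubC_pow (lam : ℂ) (A j : ℕ) :
    ((j.factorial : ℂ)) * coeff j ((expPS 1 - PowerSeries.C lam) ^ A)
      = ∑ k ∈ Finset.range (A+1), (A.choose k : ℂ) * (k:ℂ)^j * (-lam)^(A-k) := by
  have h : expPS 1 - PowerSeries.C lam = expPS 1 + PowerSeries.C (-lam) := by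
    rw [map_neg]; ring
  rw [h, add_pow, map_sum, Finset.mul_sum]
  refine Finset.sum_congr rfl fun k hk => ?_
  rw [expPS_pow, ← map_pow, ← map_natCast (PowerSeries.C (R := ℂ)) (A.choose k), mul_assoc,
    ← map_mul, mul_comm (expPS _), coeff_C_mul, expPS_coeff]
  have : ((j.factorial : ℂ)) ≠ 0 := by exact_mod_cast Nat.factorial_ne_zero j
  field_simp

lemma conv_fact (f g : ℕ → ℂ) (l : ℕ) :
    ((l.factorial : ℂ)) * coeff l (PowerSeries.mk (fun i => f i / (i.factorial : ℂ))
        * PowerSeries.mk (fun i => g i / (i.factorial : ℂ)))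
      = ∑ m ∈ Finset.range (l+1), (l.choose m : ℂ) * f (l-m) * g m := by
  rw [coeff_mul, Finset.Nat.sum_antidiagonal_eq_sum_range_succ
    (f := fun i j => coeff i (PowerSeries.mk (fun i => f i / (i.factorial : ℂ)))
      * coeff j (PowerSeries.mk (fun i => g i / (i.factorial : ℂ)))), ← Finset.sum_range_reflect,
    Finset.mul_sum]
  refine Finset.sum_congr rfl fun m hm => ?_
  rw [Finset.mem_range, Nat.lt_succ_iff] at hm
  simp only [Nat.succ_sub_one]
  rw [coeff_mk, coeff_mk, Nat.sub_sub_self hm, factC m l hm]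
  have h1 : ((m.factorial : ℂ)) ≠ 0 := by exact_mod_cast Nat.factorial_ne_zero m
  have h2 : (((l-m).factorial : ℂ)) ≠ 0 := by exact_mod_cast Nat.factorial_ne_zero (l-m)
  field_simp

lemma poly_coeff_eq (N : ℕ) (c d : ℕ → ℂ)
    (h : ∀ x : ℂ, ∑ j ∈ Finset.range (N+2), c j * x^j
        = ∑ j ∈ Finset.range (N+1), d j * x^(j+1))
    (q : ℕ) (hq : q ≤ N) : c (q+1) = d q := by
  have hP : (∑ j ∈ Finset.range (N+2), Polynomial.C (c j) * Polynomial.X ^ j)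
      = ∑ j ∈ Finset.range (N+1), Polynomial.C (d j) * Polynomial.X ^ (j+1) := by
    apply Polynomial.funext
    intro x
    simpa [Polynomial.eval_finset_sum] using h x
  have h2 := congrArg (fun P => Polynomial.coeff P (q+1)) hP
  simp only [Polynomial.finset_sum_coeff, Polynomial.coeff_C_mul, Polynomial.coeff_X_pow] at h2
  rw [Finset.sum_eq_single (q+1), Finset.sum_eq_single q] at h2
  · simpa using h2
  · intro b _ hb
    simp [Nat.succ_inj, hb, (Ne.symm hb)]
  · intro hq2
    exact absurd (Finset.mem_range.mpr (Nat.lt_succ_of_le hq)) hq2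
  · intro b _ hb
    simp [hb, Ne.symm hb]
  · intro hq2
    exact absurd (Finset.mem_range.mpr (by omega)) hq2

/-- For `λ ≠ 1`, `n ≥ 1`, `a ∈ ℤ_{≥0}` and `0 ≤ p ≤ n-1`,
`S₁(n, p+1) = (1/(1-λ))^{an} ∑_{k=0}^{an} ∑_{l=p}^{n-1} ∑_{m=p}^{l}
 C(an,k) C(n-1,l) C(l,m) C(m,p) k^{n-1-l} (-λ)^{an-k} H_{l-m}^{(an)}(λ) B_{m-p}^{(n)}`.
Here `H_m^{(α)}(x|λ)` is characterized by
`((1-λ)/(e^t-λ))^α e^{xt} = ∑_m H_m^{(α)}(x|λ) t^m/m!` with `H_m^{(α)}(λ) = H_m^{(α)}(0|λ)`,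
the Bernoulli polynomials of order `α` by `(t/(e^t-1))^α e^{xt} = ∑_m B_m^{(α)}(x) t^m/m!`
with `B_m^{(α)} = B_m^{(α)}(0)`, and the Stirling numbers of the first kind `S₁(m,l)` by
`x(x-1)⋯(x-m+1) = ∑_{l=0}^m S₁(m,l) x^l`. -/
theorem stmt5 (lam : ℂ) (hlam : lam ≠ 1) (n : ℕ) (hn : 1 ≤ n) (a p : ℕ) (hp : p ≤ n - 1)
    (H : ℕ → ℕ → ℂ → ℂ)
    (hH : ∀ (α : ℕ) (x : ℂ),
      (expPS 1 - PowerSeries.C lam) ^ α *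
          PowerSeries.mk (fun m => H α m x / (m.factorial : ℂ)) =
        PowerSeries.C (1 - lam) ^ α * expPS x)
    (S1 : ℕ → ℕ → ℂ)
    (hS1 : ∀ (m : ℕ) (x : ℂ),
      ∏ i ∈ Finset.range m, (x - i) = ∑ j ∈ Finset.range (m + 1), S1 m j * x ^ j)
    (B : ℕ → ℕ → ℂ → ℂ)
    (hB : ∀ (α : ℕ) (x : ℂ),
      (expPS 1 - 1) ^ α *
          PowerSeries.mk (fun m => B α m x / (m.factorial : ℂ)) =
        PowerSeries.X ^ α * expPS x) :
    S1 n (p + 1) =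
      (1 / (1 - lam)) ^ (a * n) *
        ∑ k ∈ Finset.range (a * n + 1), ∑ l ∈ Finset.Icc p (n - 1), ∑ m ∈ Finset.Icc p l,
          ((a * n).choose k : ℂ) * ((n - 1).choose l : ℂ) * (l.choose m : ℂ) *
            (m.choose p : ℂ) * (k : ℂ) ^ (n - 1 - l) * (-lam) ^ (a * n - k) *
            H (a * n) (l - m) 0 * B n (m - p) 0 := by
  obtain ⟨n', rfl⟩ : ∃ n', n = n' + 1 := ⟨n - 1, by omega⟩
  simp only [Nat.add_sub_cancel] at hp ⊢
  set A := a * (n' + 1) with hA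
  have h1l : (1 : ℂ) - lam ≠ 0 := sub_ne_zero.mpr (Ne.symm hlam)
  -- the basic order-1 Bernoulli series
  set v : PowerSeries ℂ := PowerSeries.mk (fun m => B 1 m 0 / (m.factorial : ℂ)) with hvdef
  have hv : (expPS 1 - 1) * v = PowerSeries.X := by
    have h := hB 1 0
    rwa [pow_one, pow_one, expPS_zero, mul_one] at h
  have hvn : ∀ α : ℕ, PowerSeries.mk (fun m => B α m 0 / (m.factorial : ℂ)) = v ^ α := by
    intro α
    have h := hB α 0
    rw [expPS_zero, mul_one] at h
    have h2 : (expPS 1 - 1) ^ α * v ^ α = PowerSeries.X ^ α := by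
      rw [← mul_pow, hv]
    exact mul_left_cancel₀ (pow_ne_zero α E_sub_one_ne) (h.trans h2.symm)
  -- the value of the Stirling number
  have hS1val : S1 (n'+1) (p+1)
      = (n'.factorial : ℂ) * ((p.factorial : ℂ))⁻¹ * coeff (n' - p) (v ^ (n'+1)) := by
    apply poly_coeff_eq n' (fun j => S1 (n'+1) j)
      (fun j => (n'.factorial : ℂ) * ((j.factorial : ℂ))⁻¹ * coeff (n' - j) (v ^ (n'+1)))
      _ p hp
    intro x
    rw [← hS1 (n'+1) x, Finset.prod_range_succ']
    have hc : coeff n' (v ^ (n'+1) * expPS x)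
        = ∑ j ∈ Finset.range (n'+1), coeff (n'-j) (v^(n'+1)) * (x^j / (j.factorial : ℂ)) := by
      rw [coeff_mul, Finset.Nat.sum_antidiagonal_eq_sum_range_succ
        (f := fun i j => coeff i (v^(n'+1)) * coeff j (expPS x)), ← Finset.sum_range_reflect]
      refine Finset.sum_congr rfl fun j hj => ?_
      rw [Finset.mem_range, Nat.lt_succ_iff] at hj
      simp only [Nat.succ_sub_one]
      rw [Nat.sub_sub_self hj, expPS_coeff]
    have hbx := betaB v hv n' x
    rw [hc] at hbx
    have : (∏ i ∈ Finset.range n', (x - ↑(i + 1))) * (x - ↑(0:ℕ))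
        = (∑ j ∈ Finset.range (n'+1), coeff (n'-j) (v^(n'+1)) * (x^j / (j.factorial : ℂ)))
            * ((n'.factorial : ℂ)) * x := by
      have hprod : (∏ i ∈ Finset.range n', (x - ((i + 1 : ℕ) : ℂ)))
          = ∏ i ∈ Finset.range n', (x - ((i:ℂ) + 1)) :=
        Finset.prod_congr rfl fun i _ => by push_cast; ring
      rw [hprod, ← hbx]
      push_cast
      ring
    rw [this, Finset.sum_mul, Finset.sum_mul]
    refine Finset.sum_congr rfl fun j hj => ?_
    have hjf : ((j.factorial : ℂ)) ≠ 0 := by exact_mod_cast Nat.factorial_ne_zero j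
    field_simp
    ring
  -- power series pieces for the right-hand side
  have hP3 : PowerSeries.mk (fun m => ((m.choose p : ℂ)) * B (n'+1) (m-p) 0 / (m.factorial : ℂ))
      = PowerSeries.C ((p.factorial : ℂ))⁻¹ * (PowerSeries.X ^ p * v ^ (n'+1)) := by
    ext m
    rw [coeff_mk, coeff_C_mul, coeff_X_pow_mul']
    split_ifs with hmp
    · rw [← hvn (n'+1), coeff_mk, factC p m hmp]
      have h1 : ((p.factorial : ℂ)) ≠ 0 := by exact_mod_cast Nat.factorial_ne_zero p
      have h2 : (((m-p).factorial : ℂ)) ≠ 0 := by exact_mod_cast Nat.factorial_ne_zero (m-p)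
      have h3 : ((m.factorial : ℂ)) ≠ 0 := by exact_mod_cast Nat.factorial_ne_zero m
      field_simp
    · rw [Nat.choose_eq_zero_of_lt (by omega), Nat.cast_zero, zero_mul, zero_div, mul_zero]
  have hPH : (expPS 1 - PowerSeries.C lam) ^ A
        * PowerSeries.mk (fun i => H A i 0 / (i.factorial : ℂ))
      = PowerSeries.C ((1-lam)^A) := by
    have h := hH A 0
    rwa [expPS_zero, mul_one, ← map_pow] at h
  set Q : PowerSeries ℂ := PowerSeries.mk (fun i => H A i 0 / (i.factorial : ℂ))
      * PowerSeries.mk (fun m => ((m.choose p : ℂ)) * B (n'+1) (m-p) 0 / (m.factorial : ℂ))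
    with hQdef
  have hmsum : ∀ l : ℕ, ∑ m ∈ Finset.Icc p l,
        (l.choose m : ℂ) * H A (l-m) 0 * ((m.choose p : ℂ) * B (n'+1) (m-p) 0)
      = (l.factorial : ℂ) * coeff l Q := by
    intro l
    have e1 := conv_fact (fun i => H A i 0)
      (fun m => ((m.choose p : ℂ)) * B (n'+1) (m-p) 0) l
    have hsub : Finset.Icc p l ⊆ Finset.range (l+1) := fun m hm => by
      rw [Finset.mem_Icc] at hm; exact Finset.mem_range.mpr (by omega)
    rw [Finset.sum_subset hsub (fun m hm hm2 => by
        rw [Finset.mem_range] at hm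
        rw [Finset.mem_Icc] at hm2
        rw [Nat.choose_eq_zero_of_lt (show m < p by omega), Nat.cast_zero, zero_mul, mul_zero])]
    exact e1.symm
  have hQ0 : ∀ l, l < p → coeff l Q = 0 := by
    intro l hl
    have hQ2 : Q = PowerSeries.X ^ p * (PowerSeries.C ((p.factorial : ℂ))⁻¹
        * (PowerSeries.mk (fun i => H A i 0 / (i.factorial : ℂ)) * v ^ (n'+1))) := by
      rw [hQdef, hP3]; ring
    rw [hQ2, coeff_X_pow_mul', if_neg (by omega)]
  have hT : (∑ k ∈ Finset.range (A + 1), ∑ l ∈ Finset.Icc p n', ∑ m ∈ Finset.Icc p l,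
        (A.choose k : ℂ) * (n'.choose l : ℂ) * (l.choose m : ℂ) *
          (m.choose p : ℂ) * (k : ℂ) ^ (n' - l) * (-lam) ^ (A - k) *
          H A (l - m) 0 * B (n'+1) (m - p) 0)
      = (n'.factorial : ℂ) * coeff n' ((expPS 1 - PowerSeries.C lam) ^ A * Q) := by
    rw [Finset.sum_comm]
    have step1 : ∀ l ∈ Finset.Icc p n',
        (∑ k ∈ Finset.range (A + 1), ∑ m ∈ Finset.Icc p l,
          (A.choose k : ℂ) * (n'.choose l : ℂ) * (l.choose m : ℂ) *
            (m.choose p : ℂ) * (k : ℂ) ^ (n' - l) * (-lam) ^ (A - k) *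
            H A (l - m) 0 * B (n'+1) (m - p) 0)
        = (n'.factorial : ℂ) * (coeff (n'-l) ((expPS 1 - PowerSeries.C lam) ^ A)
            * coeff l Q) := by
      intro l hl
      rw [Finset.mem_Icc] at hl
      have e2 : (∑ k ∈ Finset.range (A + 1), ∑ m ∈ Finset.Icc p l,
          (A.choose k : ℂ) * (n'.choose l : ℂ) * (l.choose m : ℂ) *
            (m.choose p : ℂ) * (k : ℂ) ^ (n' - l) * (-lam) ^ (A - k) *
            H A (l - m) 0 * B (n'+1) (m - p) 0)
          = (∑ k ∈ Finset.range (A + 1), (A.choose k : ℂ) * (k:ℂ)^(n'-l) * (-lam)^(A-k))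
            * ((n'.choose l : ℂ) * (∑ m ∈ Finset.Icc p l,
                (l.choose m : ℂ) * H A (l-m) 0 * ((m.choose p : ℂ) * B (n'+1) (m-p) 0))) := by
        rw [Finset.sum_mul]
        refine Finset.sum_congr rfl fun k _ => ?_
        simp only [Finset.mul_sum]
        refine Finset.sum_congr rfl fun m _ => ?_
        ring
      rw [e2, hmsum l, ← coeff_EsubC_pow lam A (n'-l), factC l n' hl.2]
      have f1 : ((l.factorial : ℂ)) ≠ 0 := by exact_mod_cast Nat.factorial_ne_zero l
      have f2 : (((n'-l).factorial : ℂ)) ≠ 0 := by exact_mod_cast Nat.factorial_ne_zero (n'-l)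
      field_simp
    rw [Finset.sum_congr rfl step1, ← Finset.mul_sum]
    congr 1
    have hsub : Finset.Icc p n' ⊆ Finset.range (n'+1) := fun l hl => by
      rw [Finset.mem_Icc] at hl; exact Finset.mem_range.mpr (by omega)
    rw [Finset.sum_subset hsub (fun l hl1 hl2 => by
        rw [Finset.mem_range] at hl1
        rw [Finset.mem_Icc] at hl2
        rw [hQ0 l (by omega), mul_zero])]
    rw [coeff_mul, Finset.Nat.sum_antidiagonal_eq_sum_range_succ
      (f := fun i j => coeff i ((expPS 1 - PowerSeries.C lam) ^ A) * coeff j Q),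
      ← Finset.sum_range_reflect]
    refine Finset.sum_congr rfl fun l hl => ?_
    rw [Finset.mem_range, Nat.lt_succ_iff] at hl
    simp only [Nat.succ_sub_one]
    rw [Nat.sub_sub_self hl]
  rw [hS1val, hT]
  have hPQ : (expPS 1 - PowerSeries.C lam) ^ A * Q
      = PowerSeries.C ((1-lam)^A) * (PowerSeries.C ((p.factorial : ℂ))⁻¹
          * (PowerSeries.X ^ p * v ^ (n'+1))) := by
    rw [hQdef, ← mul_assoc, hPH, hP3]
  rw [hPQ, coeff_C_mul, coeff_C_mul, coeff_X_pow_mul', if_pos hp]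
  have hpow : ((1-lam)^A : ℂ) ≠ 0 := pow_ne_zero _ h1l
  have hpf : ((p.factorial : ℂ)) ≠ 0 := by exact_mod_cast Nat.factorial_ne_zero p
  field_simp
  rw [one_div, inv_pow, inv_mul_cancel_right₀ hpow]
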